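/- Let B : Mₙ(ℂ) → Mₙ(ℂ) be any map and let Q, P : ℝ → Mₙ(ℂ) be differentiable curves satisfying, for all t, Q'(t) = Q(t)·B(Q(t)ᴴP(t))ᴴ and P'(t) = −P(t)·B(Q(t)ᴴP(t)). Then the curve W(t) := Q(t)ᴴP(t) satisfies the isospectral equation W'(t) = [B(W(t)), W(t)] = B(W(t))W(t) − W(t)B(W(t)) for all t. -/

import Mathlib

open Matrix

attribute [local instance] Matrix.frobeniusNormedAddCommGroup Matrix.frobeniusNormedSpace

attribute [local instance] Matrix.frobeniusNormedRing Matrix.frobeniusNormedAlgebra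

/-- If `Q' = Q·B(QᴴP)ᴴ` and `P' = −P·B(QᴴP)`, then `W = QᴴP` satisfies the
isospectral equation `W' = B(W)W − WB(W)`. -/
theorem stmt_5 (n : ℕ) (B : Matrix (Fin n) (Fin n) ℂ → Matrix (Fin n) (Fin n) ℂ)
    (Q P : ℝ → Matrix (Fin n) (Fin n) ℂ)
    (hQ : ∀ t : ℝ, HasDerivAt Q (Q t * (B ((Q t)ᴴ * P t))ᴴ) t)
    (hP : ∀ t : ℝ, HasDerivAt P (-(P t * B ((Q t)ᴴ * P t))) t) :
    ∀ t : ℝ, HasDerivAt (fun t => (Q t)ᴴ * P t)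
      (B ((Q t)ᴴ * P t) * ((Q t)ᴴ * P t) - ((Q t)ᴴ * P t) * B ((Q t)ᴴ * P t)) t := by
  intro t
  have h1 : HasDerivAt (fun t => (Q t)ᴴ) ((Q t * (B ((Q t)ᴴ * P t))ᴴ)ᴴ) t := by
    have h := (hQ t).star
    simp only [Matrix.star_eq_conjTranspose] at h
    exact h
  have h2 := h1.mul (hP t)
  refine h2.congr_deriv ?_
  simp [Matrix.conjTranspose_mul, mul_assoc, sub_eq_add_neg, mul_neg]
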